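/- Let E be a finite-dimensional real normed space, let V and L be complementary linear subspaces of E with h := dim V ≥ 1, and suppose C > 0 satisfies C‖P_L g‖ ≤ dist(g, V) for every g ∈ E; let 0 < α < C/2. Then there exists a constant C₀ > 0, depending only on E, V and L, such that: for every compact C_V(α)-set Γ ⊆ E with μH^h(Γ) < ∞ and with Θ^h_*(μH^h⌞Γ, x) > 0 for μH^h-almost every x ∈ Γ, one has that for μH^h-almost every x ∈ Γ there exists R > 0 such that for all 0 < ℓ ≤ R: μH^h(P_V(Γ ∩ B̄(x,ℓ))) ≥ C₀ · Θ^h_*(μH^h⌞Γ, x)² · ℓ^h. -/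

import Mathlib

open MeasureTheory Metric Filter Set
open scoped ENNReal Topology

variable {E : Type*}

/-- Lower `h`-density of a measure at a point. -/
noncomputable def lowerDensity [NormedAddCommGroup E] [MeasurableSpace E]
    (φ : Measure E) (h : ℝ) (x : E) : ℝ≥0∞ :=
  liminf (fun r : ℝ => φ (closedBall x r) / ENNReal.ofReal (r ^ h)) (𝓝[>] (0 : ℝ))

/-- The cone `C_V(α)` of all points whose distance from `V` is at most `α` times their norm. -/
def cone [NormedAddCommGroup E] [NormedSpace ℝ E] (V : Submodule ℝ E) (α : ℝ) : Set E :=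
  {w : E | infDist w (V : Set E) ≤ α * ‖w‖}

/-- A `C_V(α)`-set: all differences of pairs of points of `Γ` lie in the cone `C_V(α)`. -/
def IsConeSet [NormedAddCommGroup E] [NormedSpace ℝ E]
    (V : Submodule ℝ E) (α : ℝ) (Γ : Set E) : Prop :=
  ∀ p ∈ Γ, ∀ q ∈ Γ, q - p ∈ cone V α

/-- The projection onto `P` along the complementary subspace `Q`, viewed as a map `E → E`. -/
noncomputable def splitProj [NormedAddCommGroup E] [NormedSpace ℝ E]
    (P Q : Submodule ℝ E) (hc : IsCompl P Q) (g : E) : E :=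
  (P.linearProjOfIsCompl Q hc g : E)

private lemma ediam_cb {E : Type*} [NormedAddCommGroup E] (c : E) (R : ℝ) :
    EMetric.diam (closedBall c R) ≤ ENNReal.ofReal (2 * R) := by
  apply EMetric.diam_le
  intro x hx y hy
  rw [edist_dist]
  refine ENNReal.ofReal_le_ofReal ?_
  calc dist x y ≤ dist x c + dist y c := dist_triangle_right _ _ _
    _ ≤ R + R := add_le_add (mem_closedBall.mp hx) (mem_closedBall.mp hy)
    _ = 2 * R := by ring

private lemma densityBound [NormedAddCommGroup E] [NormedSpace ℝ E]
    [MeasurableSpace E] [BorelSpace E]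
    (φ : Measure E) [IsFiniteMeasure φ] (h : ℕ) (ρ : ℝ) (hρ : 0 < ρ)
    (s : Set E) (hφle : φ s ≤ μH[(h : ℝ)] s)
    (hs : ∀ x ∈ s, ∀ r : ℝ, 0 < r → r ≤ ρ →
      (2 * 8 ^ h : ℝ≥0∞) * ENNReal.ofReal (r ^ h) ≤ φ (closedBall x r)) :
    φ s = 0 := by
  rcases eq_empty_or_nonempty s with rfl | hne
  · simp
  have hc80 : (2 * 8 ^ h : ℝ≥0∞) ≠ 0 :=
    mul_ne_zero two_ne_zero (pow_ne_zero _ (by norm_num))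
  have hc8t : (2 * 8 ^ h : ℝ≥0∞) ≠ ∞ :=
    ENNReal.mul_ne_top (by norm_num) (ENNReal.pow_ne_top (by norm_num))
  have step : ∀ U : Set E, IsOpen U → s ⊆ U → μH[(h : ℝ)] s ≤ φ U / 2 := by
    intro U hUo hsU
    have key : ∀ δ : ℝ, ∃ (u : Set E) (rad : E → ℝ), u.Countable ∧
        (0 < δ → ((∀ b ∈ u, 0 < rad b ∧ rad b ≤ min ρ δ) ∧
          (s ⊆ ⋃ b ∈ u, closedBall b (4 * rad b)) ∧
          (∑' i : u, EMetric.diam (closedBall (i : E) (4 * rad (i : E))) ^ (h : ℝ))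
            ≤ φ U / 2)) := by
      intro δ
      rcases le_or_gt δ 0 with hδ | hδ
      · exact ⟨∅, fun _ => 0, countable_empty, fun h' => absurd h' (not_lt.2 hδ)⟩
      have hrad : ∀ y ∈ s, ∃ rr : ℝ, 0 < rr ∧ rr ≤ min ρ δ ∧ closedBall y rr ⊆ U := by
        intro y hy
        obtain ⟨ε, hε, hsub⟩ := (Metric.nhds_basis_closedBall.mem_iff).mp
          (hUo.mem_nhds (hsU hy))
        exact ⟨min (min ρ δ) ε, by positivity, min_le_left _ _,
          (closedBall_subset_closedBall (min_le_right _ _)).trans hsub⟩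
      choose! rad hrad0 hradle hradU using hrad
      obtain ⟨u, hus, hdisj, hcov⟩ :=
        Vitali.exists_disjoint_subfamily_covering_enlargement_closedBall s id rad (min ρ δ)
          (fun a ha => hradle a ha) 4 (by norm_num)
      have hball : ∀ b : u, (2 * 8 ^ h : ℝ≥0∞) * ENNReal.ofReal (rad (b : E) ^ h)
          ≤ φ (closedBall (b : E) (rad (b : E))) :=
        fun b => hs _ (hus b.2) _ (hrad0 _ (hus b.2)) ((hradle _ (hus b.2)).trans (min_le_left _ _))
      have hballpos : ∀ b : u, 0 < φ (closedBall (b : E) (rad (b : E))) := by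
        intro b
        refine lt_of_lt_of_le ?_ (hball b)
        have : (0:ℝ) < rad (b : E) ^ h := pow_pos (hrad0 _ (hus b.2)) h
        exact ENNReal.mul_pos hc80 (ENNReal.ofReal_pos.mpr this).ne' |>.trans_le le_rfl
      have hdisj' : Pairwise (Function.onFun Disjoint fun b : u => closedBall (b : E) (rad (b : E))) := by
        intro i j hij
        exact hdisj i.2 j.2 (Subtype.coe_injective.ne hij)
      have hcnt : u.Countable := by
        have := MeasureTheory.Measure.countable_meas_pos_of_disjoint_iUnion₀ (μ := φ)
          (As := fun b : u => closedBall (b : E) (rad (b : E)))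
          (fun b => measurableSet_closedBall.nullMeasurableSet)
          (fun i j hij => (hdisj' hij).aedisjoint)
        have huniv : {b : u | 0 < φ (closedBall (b : E) (rad (b : E)))} = univ :=
          eq_univ_of_forall fun b => hballpos b
        rw [huniv] at this
        rw [← Set.countable_coe_iff]
        exact countable_univ_iff.mp this
      refine ⟨u, rad, hcnt, fun _ => ⟨fun b hb => ⟨hrad0 _ (hus hb), hradle _ (hus hb)⟩, ?_, ?_⟩⟩
      · intro a ha
        obtain ⟨b, hb, hsub⟩ := hcov a ha
        exact mem_biUnion hb (hsub (mem_closedBall_self (hrad0 a ha).le))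
      · have hterm : ∀ b : u, EMetric.diam (closedBall (b : E) (4 * rad (b : E))) ^ (h : ℝ)
            ≤ (8 ^ h * (2 * 8 ^ h : ℝ≥0∞)⁻¹) * φ (closedBall (b : E) (rad (b : E))) := by
          intro b
          have h0 : (0:ℝ) ≤ rad (b : E) := (hrad0 _ (hus b.2)).le
          calc EMetric.diam (closedBall (b : E) (4 * rad (b : E))) ^ (h : ℝ)
              ≤ ENNReal.ofReal (8 * rad (b : E)) ^ (h : ℝ) := by
                refine ENNReal.rpow_le_rpow ?_ (by positivity)
                refine (ediam_cb _ _).trans (le_of_eq ?_)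
                congr 1; ring
            _ = ENNReal.ofReal (8 * rad (b : E)) ^ h := by
                rw [ENNReal.rpow_natCast]
            _ = (8:ℝ≥0∞) ^ h * ENNReal.ofReal (rad (b : E) ^ h) := by
                rw [← ENNReal.ofReal_pow (by positivity), mul_pow,
                  ENNReal.ofReal_mul (by positivity), ENNReal.ofReal_pow (by norm_num)]
                norm_num
            _ ≤ (8:ℝ≥0∞) ^ h * (φ (closedBall (b : E) (rad (b : E))) * (2 * 8 ^ h : ℝ≥0∞)⁻¹) := by
                gcongr
                rw [← div_eq_mul_inv]
                exact (ENNReal.le_div_iff_mul_le (Or.inl hc80) (Or.inl hc8t)).mpr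
                  (by rw [mul_comm]; exact hball b)
            _ = (8 ^ h * (2 * 8 ^ h : ℝ≥0∞)⁻¹) * φ (closedBall (b : E) (rad (b : E))) := by ring
        calc (∑' b : u, EMetric.diam (closedBall (b : E) (4 * rad (b : E))) ^ (h : ℝ))
            ≤ ∑' b : u, (8 ^ h * (2 * 8 ^ h : ℝ≥0∞)⁻¹) * φ (closedBall (b : E) (rad (b : E))) :=
              ENNReal.tsum_le_tsum hterm
          _ = (8 ^ h * (2 * 8 ^ h : ℝ≥0∞)⁻¹) * ∑' b : u, φ (closedBall (b : E) (rad (b : E))) :=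
              ENNReal.tsum_mul_left
          _ ≤ (8 ^ h * (2 * 8 ^ h : ℝ≥0∞)⁻¹) * φ U := by
              gcongr
              refine le_trans (le_of_eq
                (measure_biUnion hcnt hdisj (fun b _ => measurableSet_closedBall)).symm) ?_
              refine measure_mono (iUnion₂_subset fun b hb => ?_)
              simp only [id]
              exact (hradU _ (hus hb))
          _ = φ U / 2 := by
              have h8 : (8:ℝ≥0∞) ^ h ≠ 0 := pow_ne_zero _ (by norm_num)
              have h8t : (8:ℝ≥0∞) ^ h ≠ ∞ := ENNReal.pow_ne_top (by norm_num)
              rw [ENNReal.mul_inv (Or.inr h8t) (Or.inr h8)]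
              rw [ENNReal.div_eq_inv_mul]
              congr 1
              calc (8:ℝ≥0∞) ^ h * (2⁻¹ * ((8:ℝ≥0∞) ^ h)⁻¹)
                  = (8:ℝ≥0∞) ^ h * ((8:ℝ≥0∞) ^ h)⁻¹ * 2⁻¹ := by ring
                _ = 2⁻¹ := by rw [ENNReal.mul_inv_cancel h8 h8t, one_mul]
    choose u rad hcnt hkey using key
    haveI : ∀ δ : ℝ, Countable (u δ) := fun δ => (hcnt δ).to_subtype
    have htend : Tendsto (fun δ : ℝ => ENNReal.ofReal (8 * δ)) (𝓝[>] (0:ℝ)) (𝓝 0) := by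
      have h1 : Tendsto (fun δ : ℝ => 8 * δ) (𝓝[>] (0:ℝ)) (𝓝 (8 * 0)) :=
        ((continuous_const.mul continuous_id).tendsto 0).mono_left nhdsWithin_le_nhds
      simpa using ENNReal.tendsto_ofReal h1
    have hμ := MeasureTheory.Measure.hausdorffMeasure_le_liminf_tsum (h : ℝ) s (l := 𝓝[>] (0:ℝ))
      (fun δ => ENNReal.ofReal (8 * δ)) htend
      (fun δ (i : u δ) => closedBall (i : E) (4 * rad δ (i : E))) ?_ ?_
    · refine hμ.trans (liminf_le_of_frequently_le ?_)
      refine (Filter.Eventually.frequently ?_)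
      filter_upwards [self_mem_nhdsWithin] with δ (hδ : δ ∈ Set.Ioi (0:ℝ))
      exact (hkey δ hδ).2.2
    · filter_upwards [self_mem_nhdsWithin] with δ (hδ : δ ∈ Set.Ioi (0:ℝ))
      intro i
      obtain ⟨hr0, hrle⟩ := (hkey δ hδ).1 (i : E) i.2
      refine (ediam_cb _ _).trans (ENNReal.ofReal_le_ofReal ?_)
      have := hrle.trans (min_le_right _ _)
      linarith
    · filter_upwards [self_mem_nhdsWithin] with δ (hδ : δ ∈ Set.Ioi (0:ℝ))
      have := (hkey δ hδ).2.1
      rwa [Set.biUnion_eq_iUnion] at this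
  have h2 : 2 * μH[(h : ℝ)] s ≤ φ s := by
    refine le_of_forall_gt_imp_ge_of_dense fun c hc => ?_
    obtain ⟨U, hsU, hUo, hUc⟩ := Set.exists_isOpen_lt_of_lt s c hc
    calc 2 * μH[(h : ℝ)] s ≤ 2 * (φ U / 2) := by gcongr; exact step U hUo hsU
      _ = φ U := by rw [mul_comm]; exact ENNReal.div_mul_cancel (by norm_num) (by norm_num)
      _ ≤ c := hUc.le
  have hfin : μH[(h : ℝ)] s ≠ ∞ := by
    intro htop
    have htop2 : (⊤:ℝ≥0∞) ≤ φ s := by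
      refine le_trans (le_of_eq ?_) h2
      rw [htop, ENNReal.mul_top (by norm_num)]
    exact (measure_lt_top φ s).ne (top_le_iff.mp htop2)
  have hzero : μH[(h : ℝ)] s = 0 := by
    by_contra hne0
    have h3 : (2:ℝ≥0∞) * μH[(h : ℝ)] s ≤ 1 * μH[(h : ℝ)] s := by
      simpa using h2.trans hφle
    rw [mul_comm 2, mul_comm 1] at h3
    have h4 : (2:ℝ≥0∞) ≤ 1 := (ENNReal.mul_le_mul_iff_right hne0 hfin).mp h3
    norm_num at h4
  exact le_antisymm (hφle.trans hzero.le) zero_le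

private lemma evBall [NormedAddCommGroup E] [MeasurableSpace E]
    (φ : Measure E) (h : ℕ) (x : E) {c : ℝ≥0∞}
    (hc : c < lowerDensity φ h x) :
    ∃ R : ℝ, 0 < R ∧ ∀ r : ℝ, 0 < r → r ≤ R →
      c * ENNReal.ofReal (r ^ h) ≤ φ (closedBall x r) := by
  have hev : ∀ᶠ r in 𝓝[>] (0:ℝ),
      c < φ (closedBall x r) / ENNReal.ofReal (r ^ (h:ℝ)) :=
    eventually_lt_of_lt_liminf hc
  rw [Filter.eventually_iff] at hev
  obtain ⟨R, hR, hsub⟩ := mem_nhdsGT_iff_exists_Ioc_subset.mp hev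
  refine ⟨R, hR, fun r hr hrR => ?_⟩
  have hP : c < φ (closedBall x r) / ENNReal.ofReal (r ^ (h:ℝ)) := hsub ⟨hr, hrR⟩
  rw [Real.rpow_natCast] at hP
  have hd0 : ENNReal.ofReal (r ^ h) ≠ 0 := (ENNReal.ofReal_pos.mpr (pow_pos hr h)).ne'
  exact (ENNReal.le_div_iff_mul_le (Or.inl hd0) (Or.inl ENNReal.ofReal_ne_top)).mp hP.le

theorem stmt16 [NormedAddCommGroup E] [NormedSpace ℝ E] [FiniteDimensional ℝ E]
    [MeasurableSpace E] [BorelSpace E]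
    (V L : Submodule ℝ E) (hc : IsCompl V L) (h : ℕ) (h1 : 1 ≤ h)
    (hdim : Module.finrank ℝ V = h)
    (C : ℝ) (hC : 0 < C)
    (hproj : ∀ g : E, C * ‖splitProj L V hc.symm g‖ ≤ infDist g (V : Set E))
    (α : ℝ) (hα0 : 0 < α) (hαC : α < C / 2) :
    ∃ C₀ : ℝ, 0 < C₀ ∧
      ∀ Γ : Set E, IsCompact Γ → IsConeSet V α Γ → μH[(h : ℝ)] Γ < ⊤ →
        (∀ᵐ x ∂(μH[(h : ℝ)].restrict Γ), 0 < lowerDensity (μH[(h : ℝ)].restrict Γ) h x) →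
        ∀ᵐ x ∂(μH[(h : ℝ)].restrict Γ), ∃ R : ℝ, 0 < R ∧ ∀ ℓ : ℝ, 0 < ℓ → ℓ ≤ R →
          ENNReal.ofReal C₀ * (lowerDensity (μH[(h : ℝ)].restrict Γ) h x) ^ 2 *
              ENNReal.ofReal (ℓ ^ h) ≤
            μH[(h : ℝ)] (splitProj V L hc '' (Γ ∩ closedBall x ℓ)) := by
  classical
  have hc80 : (2 * 8 ^ h : ℝ≥0∞) ≠ 0 :=
    mul_ne_zero two_ne_zero (pow_ne_zero _ (by norm_num))
  have hc8t : (2 * 8 ^ h : ℝ≥0∞) ≠ ∞ :=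
    ENNReal.mul_ne_top (by norm_num) (ENNReal.pow_ne_top (by norm_num))
  have h2h0 : ((2:ℝ≥0∞) ^ h) ≠ 0 := pow_ne_zero _ (by norm_num)
  have h2ht : ((2:ℝ≥0∞) ^ h) ≠ ∞ := ENNReal.pow_ne_top (by norm_num)
  refine ⟨((2:ℝ) ^ (h+1) * (2 * 8 ^ h))⁻¹, by positivity, ?_⟩
  have hc₀ : ENNReal.ofReal (((2:ℝ) ^ (h+1) * (2 * 8 ^ h))⁻¹)
      = ((2:ℝ≥0∞) ^ (h+1) * (2 * 8 ^ h))⁻¹ := by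
    rw [ENNReal.ofReal_inv_of_pos (by positivity)]
    congr 1
    rw [ENNReal.ofReal_mul (by positivity), ENNReal.ofReal_pow (by norm_num),
      ENNReal.ofReal_mul (by norm_num), ENNReal.ofReal_pow (by norm_num)]
    norm_num
  intro Γ hΓc hconeset hfin hpos
  set φ := μH[(h : ℝ)].restrict Γ with hφdef
  have hΓm : MeasurableSet Γ := hΓc.measurableSet
  haveI : IsFiniteMeasure φ := ⟨by rwa [hφdef, Measure.restrict_apply_univ]⟩
  have hφle : ∀ t : Set E, φ t ≤ μH[(h : ℝ)] t := fun t => by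
    rw [hφdef, Measure.restrict_apply' hΓm]
    exact measure_mono inter_subset_left
  -- a.e. upper bound on the lower density
  have hbd : ∀ᵐ x ∂φ, lowerDensity φ h x ≤ (2 * 8 ^ h : ℝ≥0∞) := by
    rw [ae_iff]
    simp only [not_le]
    have hsubset : {x | (2 * 8 ^ h : ℝ≥0∞) < lowerDensity φ h x} ⊆
        ⋃ n : ℕ, {x | ∀ r : ℝ, 0 < r → r ≤ ((n:ℝ)+1)⁻¹ →
          (2 * 8 ^ h : ℝ≥0∞) * ENNReal.ofReal (r ^ h) ≤ φ (closedBall x r)} := by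
      intro x hx
      obtain ⟨R, hR0, hball⟩ := evBall φ h x hx
      obtain ⟨n, hn⟩ := exists_nat_gt R⁻¹
      refine mem_iUnion.2 ⟨n, fun r hr hrn => hball r hr (hrn.trans ?_)⟩
      have hRn : R⁻¹ ≤ (n:ℝ) + 1 := hn.le.trans (by linarith)
      calc ((n:ℝ)+1)⁻¹ ≤ (R⁻¹)⁻¹ := by gcongr
        _ = R := inv_inv R
    refine measure_mono_null hsubset (measure_iUnion_null fun n => ?_)
    exact densityBound φ h ((n:ℝ)+1)⁻¹ (by positivity) _ (hφle _)
      (fun x hx r h1r h2r => hx r h1r h2r)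
  -- projection estimate
  have hkey : ∀ p ∈ Γ, ∀ q ∈ Γ,
      ‖q - p‖ ≤ 2 * ‖splitProj V L hc q - splitProj V L hc p‖ := by
    intro p hp q hq
    set w := q - p with hw
    have hcone' : infDist w (V : Set E) ≤ α * ‖w‖ := hconeset p hp q hq
    have hdec : (splitProj V L hc w) + (splitProj L V hc.symm w) = w :=
      Submodule.projection_add_projection_eq_self hc w
    have hle1 : C * ‖splitProj L V hc.symm w‖ ≤ α * ‖w‖ := (hproj w).trans hcone'
    have hle2 : ‖splitProj L V hc.symm w‖ ≤ ‖w‖ / 2 := by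
      nlinarith [norm_nonneg w, norm_nonneg (splitProj L V hc.symm w)]
    have hle3 : ‖w‖ ≤ ‖splitProj V L hc w‖ + ‖w‖ / 2 := by
      calc ‖w‖ = ‖splitProj V L hc w + splitProj L V hc.symm w‖ := by rw [hdec]
        _ ≤ ‖splitProj V L hc w‖ + ‖splitProj L V hc.symm w‖ := norm_add_le _ _
        _ ≤ ‖splitProj V L hc w‖ + ‖w‖ / 2 := by linarith
    have heq : splitProj V L hc q - splitProj V L hc p = splitProj V L hc w := by
      simp only [splitProj, hw, map_sub]
      norm_num
    rw [heq]
    linarith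
  have hproj2 : ∀ S ⊆ Γ,
      μH[(h : ℝ)] S ≤ 2 ^ h * μH[(h : ℝ)] (splitProj V L hc '' S) := by
    intro S hS
    set π := splitProj V L hc with hπ
    have hinj : InjOn π Γ := by
      intro p hp q hq hpq
      have hk := hkey p hp q hq
      rw [hpq, sub_self, norm_zero, mul_zero] at hk
      exact (sub_eq_zero.mp (norm_le_zero_iff.mp hk)).symm
    have hg : ∀ x ∈ Γ, Function.invFunOn π Γ (π x) = x := fun x hx =>
      hinj (Function.invFunOn_mem ⟨x, hx, rfl⟩) hx (Function.invFunOn_eq ⟨x, hx, rfl⟩)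
    set g := Function.invFunOn π Γ with hgdef
    have hlip : LipschitzOnWith 2 g (π '' Γ) := by
      apply LipschitzOnWith.of_dist_le_mul
      rintro y₁ ⟨a, ha, rfl⟩ y₂ ⟨b, hb, rfl⟩
      rw [hg a ha, hg b hb, dist_eq_norm, dist_eq_norm]
      push_cast
      exact hkey b hb a ha
    have himg : g '' (π '' S) = S := by
      rw [image_image]
      calc (fun x => g (π x)) '' S = id '' S := image_congr fun x hx => hg x (hS hx)
        _ = S := image_id S
    calc μH[(h : ℝ)] S = μH[(h : ℝ)] (g '' (π '' S)) := by rw [himg]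
      _ ≤ (2 : ℝ≥0∞) ^ (h : ℝ) * μH[(h : ℝ)] (π '' S) := by
          have := (hlip.mono (show π '' S ⊆ π '' Γ from fun _ ⟨a, ha, e⟩ => ⟨a, hS ha, e⟩)).hausdorffMeasure_image_le
            (d := (h : ℝ)) (by positivity)
          simpa using this
      _ = 2 ^ h * μH[(h : ℝ)] (π '' S) := by
          rw [ENNReal.rpow_natCast]
  -- conclusion
  filter_upwards [hpos, hbd] with x hx0 hxM
  have hΘt : lowerDensity φ h x ≠ ∞ :=
    (lt_of_le_of_lt hxM (lt_top_iff_ne_top.mpr hc8t)).ne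
  have hhalf : lowerDensity φ h x / 2 < lowerDensity φ h x :=
    ENNReal.half_lt_self hx0.ne' hΘt
  obtain ⟨R, hR0, hball⟩ := evBall φ h x hhalf
  refine ⟨R, hR0, fun ℓ hℓ0 hℓR => ?_⟩
  have e1 : φ (closedBall x ℓ) = μH[(h : ℝ)] (Γ ∩ closedBall x ℓ) := by
    rw [hφdef, Measure.restrict_apply' hΓm, inter_comm]
  calc ENNReal.ofReal (((2:ℝ) ^ (h+1) * (2 * 8 ^ h))⁻¹) * (lowerDensity φ h x) ^ 2 *
        ENNReal.ofReal (ℓ ^ h)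
      ≤ ENNReal.ofReal (((2:ℝ) ^ (h+1) * (2 * 8 ^ h))⁻¹) *
          ((2 * 8 ^ h : ℝ≥0∞) * lowerDensity φ h x) * ENNReal.ofReal (ℓ ^ h) := by
        gcongr
        rw [sq]
        exact mul_le_mul_left hxM _
    _ = ((2:ℝ≥0∞) ^ (h+1))⁻¹ * lowerDensity φ h x * ENNReal.ofReal (ℓ ^ h) := by
        rw [hc₀, ENNReal.mul_inv (Or.inl (pow_ne_zero _ (by norm_num)))
          (Or.inl (ENNReal.pow_ne_top (by norm_num)))]
        have : ((2:ℝ≥0∞) ^ (h+1))⁻¹ * (2 * 8 ^ h)⁻¹ * ((2 * 8 ^ h) * lowerDensity φ h x)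
            = ((2:ℝ≥0∞) ^ (h+1))⁻¹ * (((2 * 8 ^ h)⁻¹ * (2 * 8 ^ h)) * lowerDensity φ h x) := by
          ring
        rw [this, ENNReal.inv_mul_cancel hc80 hc8t, one_mul]
    _ = ((2:ℝ≥0∞) ^ h)⁻¹ * ((lowerDensity φ h x / 2) * ENNReal.ofReal (ℓ ^ h)) := by
        rw [pow_succ, ENNReal.mul_inv (Or.inl h2h0) (Or.inl h2ht), div_eq_mul_inv]
        ring
    _ ≤ ((2:ℝ≥0∞) ^ h)⁻¹ * φ (closedBall x ℓ) :=
        mul_le_mul_right (hball ℓ hℓ0 hℓR) _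
    _ ≤ ((2:ℝ≥0∞) ^ h)⁻¹ * (2 ^ h * μH[(h : ℝ)] (splitProj V L hc '' (Γ ∩ closedBall x ℓ))) := by
        rw [e1]
        exact mul_le_mul_right (hproj2 _ inter_subset_left) _
    _ = μH[(h : ℝ)] (splitProj V L hc '' (Γ ∩ closedBall x ℓ)) := by
        rw [← mul_assoc, ENNReal.inv_mul_cancel h2h0 h2ht, one_mul]
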